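/- Let ξ^1, …, ξ^M be tangent solutions, (H_1,…,H_N) a Lamé solution, and Ω^1,…,Ω^M : ℤ^N → ℝ potentials satisfying Δ_m Ω^a = ξ^a_m·(T_m H_m) for all m and a. Let 𝒲 be the discrete multi-Wroński matrix of ξ^1,…,ξ^M for the partition M = m_1 + … + m_N. For i ∈ {1,…,N}, let ℍ_i be the M×M matrix obtained from 𝒲 by replacing the row (i, m_i−1) by (Ω^1, …, Ω^M); and for i ≠ j, let 𝒲_{ij} be obtained from 𝒲 by replacing the row (j, m_j−1) by (Δ_i^{m_i} ξ^1_i, …, Δ_i^{m_i} ξ^M_i). Then for all i ≠ k the bilinear identity holds: (det 𝒲)·Δ_k(det ℍ_i) − (det ℍ_i)·Δ_k(det 𝒲) + (det 𝒲_{ki})·T_k(det ℍ_k) = 0. -/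

import Mathlib

noncomputable section

/-- Shift operator `T_j`: `(T_j f)(n) = f(n + e_j)`. -/
def T {N : ℕ} (j : Fin N) (f : (Fin N → ℤ) → ℝ) : (Fin N → ℤ) → ℝ :=
  fun n => f (n + Pi.single j 1)

/-- Difference operator `Δ_j = T_j − 1`. -/
def Δ {N : ℕ} (j : Fin N) (f : (Fin N → ℤ) → ℝ) : (Fin N → ℤ) → ℝ :=
  fun n => f (n + Pi.single j 1) - f n

/-- The discrete multi-Wroński matrix `𝒲(n)` of the `M = m_1 + ⋯ + m_N` tangent
solutions `ξ^a` (`a` ranges over the canonical `M`-element index set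
`Σ j : Fin N, Fin (m j)`): its row `(j, p)` is `(Δ_j^p ξ^a_j(n))_a`. -/
def Wmat {N : ℕ} (m : Fin N → ℕ)
    (ξ : (Σ j : Fin N, Fin (m j)) → Fin N → (Fin N → ℤ) → ℝ) (n : Fin N → ℤ) :
    Matrix (Σ j : Fin N, Fin (m j)) (Σ j : Fin N, Fin (m j)) ℝ :=
  Matrix.of fun r a => (Δ r.1)^[(r.2 : ℕ)] (ξ a r.1) n

/-- The index `(k, m_k − 1)` of the last row of the `k`-th block. -/
def lastRow {N : ℕ} (m : Fin N → ℕ) (k : Fin N) (h : 0 < m k) :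
    Σ j : Fin N, Fin (m j) :=
  ⟨k, ⟨m k - 1, Nat.sub_lt h Nat.one_pos⟩⟩

/-- The bordered matrix `𝕏_i(n)`: the multi-Wroński matrix `𝒲(n)` augmented by the
column `(Δ_j^p χ_j(n))_{(j,p)}` built from the tangent solution `χ` and by the bottom
row `(Δ_i^{m_i} ξ^a_i(n))_a, Δ_i^{m_i} χ_i(n)`. -/
def Xmat {N : ℕ} (m : Fin N → ℕ)
    (ξ : (Σ j : Fin N, Fin (m j)) → Fin N → (Fin N → ℤ) → ℝ)
    (χ : Fin N → (Fin N → ℤ) → ℝ) (i : Fin N) (n : Fin N → ℤ) :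
    Matrix (Option (Σ j : Fin N, Fin (m j))) (Option (Σ j : Fin N, Fin (m j))) ℝ :=
  Matrix.of fun r a =>
    match r, a with
    | some r, some a => (Δ r.1)^[(r.2 : ℕ)] (ξ a r.1) n
    | some r, none => (Δ r.1)^[(r.2 : ℕ)] (χ r.1) n
    | none, some a => (Δ i)^[m i] (ξ a i) n
    | none, none => (Δ i)^[m i] (χ i) n
-- ===== auxiliary lemmas =====

lemma my_updateRow_comm {ι α R : Type*} [DecidableEq ι] (A : Matrix ι α R) {p t : ι}
    (h : p ≠ t) (x y : α → R) :
    (A.updateRow p x).updateRow t y = (A.updateRow t y).updateRow p x := by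
  ext r c
  rcases eq_or_ne r t with rfl | hrt
  · simp [Matrix.updateRow_ne h.symm]
  · rcases eq_or_ne r p with rfl | hrp
    · simp [Matrix.updateRow_ne hrt]
    · simp [Matrix.updateRow_ne hrt, Matrix.updateRow_ne hrp]

lemma my_det_updateRow_span {ι : Type*} [Fintype ι] [DecidableEq ι]
    (A : Matrix ι ι ℝ) (r0 : ι) (x : ι → ℝ)
    (hx : x ∈ Submodule.span ℝ {v | ∃ r, r ≠ r0 ∧ v = A r}) :
    (A.updateRow r0 x).det = 0 := by
  induction hx using Submodule.span_induction with
  | mem v hv =>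
      obtain ⟨r, hr, rfl⟩ := hv
      exact Matrix.det_zero_of_row_eq (Ne.symm hr)
        (by rw [Matrix.updateRow_self, Matrix.updateRow_ne hr])
  | zero =>
      exact Matrix.det_eq_zero_of_row_eq_zero r0 (by simp)
  | add v w hv hw ihv ihw =>
      rw [Matrix.det_updateRow_add, ihv, ihw, add_zero]
  | smul a v hv ih =>
      rw [Matrix.det_updateRow_smul, ih, mul_zero]

lemma my_det_row_span {ι : Type*} [Fintype ι] [DecidableEq ι]
    (A : Matrix ι ι ℝ) (r0 : ι)
    (h : A r0 ∈ Submodule.span ℝ {v | ∃ r, r ≠ r0 ∧ v = A r}) :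
    A.det = 0 := by
  have := my_det_updateRow_span A r0 (A r0) h
  rwa [Matrix.updateRow_eq_self] at this

lemma my_det_swap {ι : Type*} [Fintype ι] [DecidableEq ι]
    (A : Matrix ι ι ℝ) {p t : ι} (h : p ≠ t) (x y : ι → ℝ) :
    ((A.updateRow p x).updateRow t y).det = -((A.updateRow p y).updateRow t x).det := by
  have hmat : ((A.updateRow p x).updateRow t y) =
      ((A.updateRow p y).updateRow t x).submatrix (Equiv.swap p t) id := by
    ext r c
    rcases eq_or_ne r t with rfl | hrt
    · simp [Matrix.submatrix, Equiv.swap_apply_right, Matrix.updateRow_ne h.symm,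
        Matrix.updateRow_ne h]
    · rcases eq_or_ne r p with rfl | hrp
      · simp [Matrix.submatrix, Equiv.swap_apply_left, Matrix.updateRow_ne hrt,
          Matrix.updateRow_ne h.symm]
      · simp [Matrix.submatrix, Equiv.swap_apply_of_ne_of_ne hrp hrt,
          Matrix.updateRow_ne hrt, Matrix.updateRow_ne hrp]
  rw [hmat, Matrix.det_permute, Equiv.Perm.sign_swap h]
  push_cast
  ring

/-- The 3-term Grassmann–Plücker-type identity. -/
lemma key4 {ι : Type*} [Fintype ι] [DecidableEq ι]
    (V Z : Matrix ι ι ℝ) (p t : ι) (hpt : p ≠ t)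
    (hspan : ∀ r, r ≠ p → r ≠ t →
      Z r ∈ Submodule.span ℝ {v | ∃ r', r' ≠ p ∧ v = V r'})
    (x y z : ι → ℝ) :
    (V.updateRow p x).det * ((Z.updateRow p y).updateRow t z).det
      - (V.updateRow p y).det * ((Z.updateRow p x).updateRow t z).det
      + (V.updateRow p z).det * ((Z.updateRow p x).updateRow t y).det = 0 := by
  classical
  set L : (ι → ℝ) →ₗ[ℝ] ℝ :=
    { toFun := fun v => (V.updateRow p v).det
      map_add' := fun u v => Matrix.det_updateRow_add V p u v
      map_smul' := fun a v => Matrix.det_updateRow_smul V p a v } with hL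
  set G : (ι → ℝ) →ₗ[ℝ] (ι → ℝ) →ₗ[ℝ] ℝ :=
    LinearMap.mk₂ ℝ (fun a b => ((Z.updateRow p a).updateRow t b).det)
      (fun a a' b => by
        show ((Z.updateRow p (a + a')).updateRow t b).det
            = ((Z.updateRow p a).updateRow t b).det + ((Z.updateRow p a').updateRow t b).det
        rw [my_updateRow_comm Z hpt, my_updateRow_comm Z hpt (x := a),
          my_updateRow_comm Z hpt (x := a')]
        exact Matrix.det_updateRow_add _ p a a')
      (fun c a b => by
        show ((Z.updateRow p (c • a)).updateRow t b).det
            = c • ((Z.updateRow p a).updateRow t b).det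
        rw [my_updateRow_comm Z hpt, my_updateRow_comm Z hpt (x := a)]
        exact Matrix.det_updateRow_smul _ p c a)
      (fun a b b' => Matrix.det_updateRow_add _ t b b')
      (fun c a b => Matrix.det_updateRow_smul _ t c b) with hG
  have hGapp : ∀ a b, G a b = ((Z.updateRow p a).updateRow t b).det := fun a b => rfl
  have hLapp : ∀ v, L v = (V.updateRow p v).det := fun v => rfl
  have hGdiag : ∀ a, G a a = 0 := by
    intro a
    rw [hGapp]
    exact Matrix.det_zero_of_row_eq hpt
      (by rw [Matrix.updateRow_ne hpt, Matrix.updateRow_self, Matrix.updateRow_self])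
  have hGswap : ∀ a b, G a b = - G b a := by
    intro a b; rw [hGapp, hGapp]; exact my_det_swap Z hpt a b
  have hGrow1 : ∀ r, r ≠ p → r ≠ t → ∀ b, G (Z r) b = 0 := by
    intro r hrp hrt b
    rw [hGapp]
    refine Matrix.det_zero_of_row_eq (Ne.symm hrp) ?_
    rw [Matrix.updateRow_ne hpt, Matrix.updateRow_self, Matrix.updateRow_ne hrt,
      Matrix.updateRow_ne hrp]
  have hGrow2 : ∀ r, r ≠ p → r ≠ t → ∀ b, G b (Z r) = 0 := by
    intro r hrp hrt b
    rw [hGswap]; rw [hGrow1 r hrp hrt b]; ring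
  have hLrow : ∀ r, r ≠ p → r ≠ t → L (Z r) = 0 := by
    intro r hrp hrt
    rw [hLapp]
    exact my_det_updateRow_span V p _ (hspan r hrp hrt)
  suffices hFz : L x * G y z - L y * G x z + L z * G x y = 0 by
    simpa only [hGapp, hLapp] using hFz
  set v : (Fin 3 ⊕ {r : ι // r ≠ p ∧ r ≠ t}) → (ι → ℝ) :=
    Sum.elim ![x, y, z] (fun r => Z r.1) with hv
  have hcard : ¬ LinearIndependent ℝ v := by
    intro hli
    have h1 := LinearIndependent.fintype_card_le_finrank hli
    rw [Module.finrank_pi] at h1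
    have h2 : Fintype.card (Option ι) ≤ Fintype.card (Fin 3 ⊕ {r : ι // r ≠ p ∧ r ≠ t}) := by
      let f : Option ι → Fin 3 ⊕ {r : ι // r ≠ p ∧ r ≠ t} := fun o =>
          match o with
          | none => Sum.inl 2
          | some r =>
            if hr : r = p then Sum.inl 0 else
            if hr' : r = t then Sum.inl 1 else Sum.inr ⟨r, hr, hr'⟩
      have hinj : Function.Injective f := by
        have hLI : Function.LeftInverse (fun w : Fin 3 ⊕ {r : ι // r ≠ p ∧ r ≠ t} =>
            match w with
            | Sum.inl j => if j = 0 then some p else if j = 1 then some t else none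
            | Sum.inr r => some r.1) f := by
          intro o
          match o with
          | none => rfl
          | some r =>
              dsimp only [f]
              split_ifs with hr hr'
              · subst hr; rfl
              · subst hr'; rfl
              · rfl
        exact hLI.injective
      exact Fintype.card_le_of_injective f hinj
    simp only [Fintype.card_option, Fintype.card_sum, Fintype.card_fin] at h1 h2
    omega
  obtain ⟨g, hgsum, i0, hgi0⟩ := Fintype.not_linearIndependent_iff.mp hcard
  rw [Fintype.sum_sum_type] at hgsum
  simp only [hv, Sum.elim_inl, Sum.elim_inr, Fin.sum_univ_three,
    Matrix.cons_val_zero, Matrix.cons_val_one, Matrix.head_cons,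
    Matrix.cons_val_two, Matrix.tail_cons] at hgsum
  have hLsub : ∀ r : {r : ι // r ≠ p ∧ r ≠ t}, L (Z r.1) = 0 := fun r => hLrow r.1 r.2.1 r.2.2
  have hG1sub : ∀ (r : {r : ι // r ≠ p ∧ r ≠ t}) (b : ι → ℝ), G (Z r.1) b = 0 :=
    fun r b => hGrow1 r.1 r.2.1 r.2.2 b
  have hG2sub : ∀ (r : {r : ι // r ≠ p ∧ r ≠ t}) (b : ι → ℝ), G b (Z r.1) = 0 :=
    fun r b => hGrow2 r.1 r.2.1 r.2.2 b
  have EL : g (Sum.inl 0) * L x + g (Sum.inl 1) * L y + g (Sum.inl 2) * L z = 0 := by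
    have h := congrArg L hgsum
    simpa only [map_add, map_smul, map_sum, map_zero, hLsub, smul_eq_mul, mul_zero,
      Finset.sum_const_zero, add_zero] using h
  have EGz : g (Sum.inl 0) * G x z + g (Sum.inl 1) * G y z = 0 := by
    have h := congrArg (G.flip z) hgsum
    simpa only [map_add, map_smul, map_sum, map_zero, LinearMap.flip_apply, hG1sub,
      smul_eq_mul, mul_zero, Finset.sum_const_zero, add_zero, hGdiag] using h
  have EGy : g (Sum.inl 0) * G x y + g (Sum.inl 2) * G z y = 0 := by
    have h := congrArg (G.flip y) hgsum
    simpa only [map_add, map_smul, map_sum, map_zero, LinearMap.flip_apply, hG1sub,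
      smul_eq_mul, mul_zero, Finset.sum_const_zero, add_zero, hGdiag] using h
  have EGx : g (Sum.inl 1) * G x y + g (Sum.inl 2) * G x z = 0 := by
    have h := congrArg (G x) hgsum
    simpa only [map_add, map_smul, map_sum, map_zero, hG2sub, smul_eq_mul, mul_zero,
      Finset.sum_const_zero, add_zero, zero_add, hGdiag] using h
  have hzy : G z y = - G y z := hGswap z y
  rw [hzy] at EGy
  by_cases h0 : g (Sum.inl 0) = 0
  case neg =>
    have h1 : g (Sum.inl 0) * (L x * G y z - L y * G x z + L z * G x y) = 0 := by
      linear_combination (G y z) * EL - L y * EGz + L z * EGy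
    rcases mul_eq_zero.mp h1 with h | h
    · exact absurd h h0
    · exact h
  by_cases h1 : g (Sum.inl 1) = 0
  case neg =>
    have hh : g (Sum.inl 1) * (L x * G y z - L y * G x z + L z * G x y) = 0 := by
      linear_combination L x * EGz - G x z * EL + L z * EGx
    rcases mul_eq_zero.mp hh with h | h
    · exact absurd h h1
    · exact h
  by_cases h2 : g (Sum.inl 2) = 0
  case neg =>
    have hh : g (Sum.inl 2) * (L x * G y z - L y * G x z + L z * G x y) = 0 := by
      linear_combination (- L x) * EGy - L y * EGx + G x y * EL
    rcases mul_eq_zero.mp hh with h | h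
    · exact absurd h h2
    · exact h
  -- all three scalar coefficients vanish
  rcases i0 with j | r0
  · exfalso
    fin_cases j
    · exact hgi0 h0
    · exact hgi0 h1
    · exact hgi0 h2
  · -- the Z-rows off p,t are linearly dependent, hence G ≡ 0
    rw [h0, h1, h2] at hgsum
    simp only [zero_smul, zero_add] at hgsum
    have hne : g (Sum.inr r0) ≠ 0 := hgi0
    rw [← Finset.add_sum_erase Finset.univ (fun r => g (Sum.inr r) • Z r.1)
      (Finset.mem_univ r0)] at hgsum
    have hS := hgsum
    have hmem0 : Z r0.1 ∈ Submodule.span ℝ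
        {w : ι → ℝ | ∃ r : {r : ι // r ≠ p ∧ r ≠ t}, r ≠ r0 ∧ w = Z r.1} := by
      have hz : Z r0.1 = (g (Sum.inr r0))⁻¹ •
          (- ∑ r ∈ Finset.univ.erase r0, g (Sum.inr r) • Z r.1) := by
        rw [← eq_neg_of_add_eq_zero_left hS, inv_smul_smul₀ hne]
      rw [hz]
      refine Submodule.smul_mem _ _ (Submodule.neg_mem _ (Submodule.sum_mem _ ?_))
      intro r hr
      exact Submodule.smul_mem _ _ (Submodule.subset_span
        ⟨r, Finset.ne_of_mem_erase hr, rfl⟩)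
    have hGzero : ∀ a b, G a b = 0 := by
      intro a b
      rw [hGapp]
      apply my_det_row_span _ r0.1
      have hrow : ((Z.updateRow p a).updateRow t b) r0.1 = Z r0.1 := by
        rw [Matrix.updateRow_ne r0.2.2, Matrix.updateRow_ne r0.2.1]
      rw [hrow]
      refine Submodule.span_le.mpr ?_ hmem0
      rintro w ⟨r, hrne, rfl⟩
      refine Submodule.subset_span ⟨r.1, fun h => hrne (Subtype.ext h), ?_⟩
      rw [Matrix.updateRow_ne r.2.2, Matrix.updateRow_ne r.2.1]
    rw [hGzero, hGzero, hGzero]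
    ring

lemma my_delta_comm {N : ℕ} (j k : Fin N) (f : (Fin N → ℤ) → ℝ) :
    Δ j (Δ k f) = Δ k (Δ j f) := by
  funext n
  simp only [Δ]
  rw [add_right_comm]
  ring

lemma my_delta_iterate_comm {N : ℕ} (j k : Fin N) (p : ℕ) (f : (Fin N → ℤ) → ℝ) :
    (Δ j)^[p] (Δ k f) = Δ k ((Δ j)^[p] f) := by
  induction p generalizing f with
  | zero => rfl
  | succ q ih =>
      rw [Function.iterate_succ_apply, Function.iterate_succ_apply,
        my_delta_comm j k f, ih]

/-- iterated `Δ_j` of a multiple of a `j`-eigen-like function stays a multiple. -/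
lemma my_exists_multiplier {N : ℕ} (j : Fin N) (Qkj : (Fin N → ℤ) → ℝ)
    {A : Type*} (ζ : A → (Fin N → ℤ) → ℝ)
    (hζ : ∀ a, Δ j (ζ a) = T j Qkj * ζ a)
    (f : (Fin N → ℤ) → ℝ) (p : ℕ) :
    ∃ g : (Fin N → ℤ) → ℝ, ∀ a, (Δ j)^[p] (f * ζ a) = g * ζ a := by
  induction p generalizing f with
  | zero => exact ⟨f, fun a => rfl⟩
  | succ q ih =>
      have hstep : ∀ a, Δ j (f * ζ a)
          = (fun n => f (n + Pi.single j 1) * (1 + Qkj (n + Pi.single j 1)) - f n) * ζ a := by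
        intro a
        funext n
        have h := congrFun (hζ a) n
        simp only [Δ, T, Pi.mul_apply] at h ⊢
        linear_combination f (n + Pi.single j 1) * h
      obtain ⟨g, hg⟩ := ih (fun n => f (n + Pi.single j 1) * (1 + Qkj (n + Pi.single j 1)) - f n)
      refine ⟨g, fun a => ?_⟩
      rw [Function.iterate_succ_apply, hstep a, hg a]

def liftMat {S : Type*} (P : Matrix S S ℝ) (u : S → ℝ) : Matrix (Option S) (Option S) ℝ :=
  Matrix.of fun r c =>
    match r, c with
    | some s, some a => P s a
    | some s, none => u s
    | none, some _ => 0
    | none, none => 1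

lemma det_liftMat {S : Type*} [Fintype S] [DecidableEq S] (P : Matrix S S ℝ) (u : S → ℝ) :
    (liftMat P u).det = P.det := by
  have h : liftMat P u =
      (Matrix.fromBlocks P (Matrix.of fun s (_ : Unit) => u s) 0 1).submatrix
        (Equiv.optionEquivSumPUnit S).symm.symm (Equiv.optionEquivSumPUnit S).symm.symm := by
    ext r c
    match r, c with
    | some s, some a => rfl
    | some s, none => rfl
    | none, some a => rfl
    | none, none => simp [liftMat, Matrix.fromBlocks, Equiv.optionEquivSumPUnit]
  rw [h, Matrix.det_submatrix_equiv_self, Matrix.det_fromBlocks_zero₂₁, Matrix.det_one, mul_one]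

lemma my_iterate_shift {N : ℕ} (j : Fin N) (f : (Fin N → ℤ) → ℝ) (r : ℕ) (n : Fin N → ℤ) :
    (Δ j)^[r] f (n + Pi.single j 1) = (Δ j)^[r] f n + (Δ j)^[r + 1] f n := by
  rw [Function.iterate_succ_apply']
  simp [Δ]

/-- The key structural relation: `Δ_k` of an iterated difference `Δ_j^q ξ_j` is a
combination of `ξ_k` and the lower rows `Δ_j^r ξ_j`, `r < q`, with coefficients
independent of the label `a`. -/
lemma my_row_relation {N : ℕ} (j k : Fin N) (hjk : j ≠ k)
    (Q : Fin N → Fin N → (Fin N → ℤ) → ℝ) {A : Type*}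
    (ξ : A → Fin N → (Fin N → ℤ) → ℝ)
    (hξ : ∀ a, ∀ j' k' : Fin N, j' ≠ k' → Δ k' (ξ a j') = T k' (Q j' k') * ξ a k')
    (q : ℕ) :
    ∃ (c : (Fin N → ℤ) → ℝ) (d : ℕ → (Fin N → ℤ) → ℝ),
      (∀ r, q ≤ r → ∀ n, d r n = 0) ∧
      ∀ a n, Δ k ((Δ j)^[q] (ξ a j)) n
        = c n * ξ a k n + ∑ r ∈ Finset.range q, d r n * (Δ j)^[r] (ξ a j) n := by
  induction q with
  | zero =>
      refine ⟨T k (Q j k), fun _ => 0, fun _ _ _ => rfl, fun a n => ?_⟩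
      rw [show (Δ j)^[0] (ξ a j) = ξ a j from rfl]
      rw [hξ a j k hjk]
      simp
  | succ q ih =>
      obtain ⟨c, d, hd0, hcd⟩ := ih
      set ej := (Pi.single j 1 : Fin N → ℤ) with hej
      refine ⟨fun n => c (n + ej) - c n,
        fun r n => (if r = 0 then c (n + ej) * Q k j (n + ej) else d (r - 1) (n + ej))
          + (d r (n + ej) - d r n), ?_, ?_⟩
      · intro r hr n
        dsimp only
        rw [if_neg (by omega), hd0 (r-1) (by omega) _, hd0 r (by omega) _,
          hd0 r (by omega) _]
        ring
      · intro a n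
        -- LHS: commute and unfold one step of Δ k ∘ Δ_j^{q+1}
        have hL : Δ k ((Δ j)^[q + 1] (ξ a j)) n
            = Δ k ((Δ j)^[q] (ξ a j)) (n + ej) - Δ k ((Δ j)^[q] (ξ a j)) n := by
          rw [Function.iterate_succ_apply', ← my_delta_comm]
          simp [Δ, hej]
        rw [hL, hcd a (n + ej), hcd a n]
        -- pointwise tangent equation in direction j for ξ_k
        have hxk : ξ a k (n + ej) = ξ a k n + Q k j (n + ej) * ξ a j n := by
          have h := congrFun (hξ a k j (Ne.symm hjk)) n
          simp only [Δ, T, Pi.mul_apply, hej] at h ⊢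
          linarith
        rw [hxk]
        -- shift the iterated differences
        have hshift : ∀ r ∈ Finset.range q,
            d r (n + ej) * (Δ j)^[r] (ξ a j) (n + ej)
            = d r (n + ej) * (Δ j)^[r] (ξ a j) n
              + d r (n + ej) * (Δ j)^[r + 1] (ξ a j) n := by
          intro r _
          rw [my_iterate_shift]
          ring
        rw [Finset.sum_congr rfl hshift, Finset.sum_add_distrib]
        -- now reorganize the RHS sum
        have hRHS : ∑ r ∈ Finset.range (q + 1),
            ((if r = 0 then c (n + ej) * Q k j (n + ej) else d (r - 1) (n + ej))
              + (d r (n + ej) - d r n)) * (Δ j)^[r] (ξ a j) n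
            = (c (n + ej) * Q k j (n + ej) * ξ a j n
                + ∑ r ∈ Finset.range q, d r (n + ej) * (Δ j)^[r + 1] (ξ a j) n)
              + (∑ r ∈ Finset.range q, d r (n + ej) * (Δ j)^[r] (ξ a j) n
                - ∑ r ∈ Finset.range q, d r n * (Δ j)^[r] (ξ a j) n) := by
          have hsplit : ∀ r ∈ Finset.range (q + 1),
              ((if r = 0 then c (n + ej) * Q k j (n + ej) else d (r - 1) (n + ej))
                + (d r (n + ej) - d r n)) * (Δ j)^[r] (ξ a j) n
              = (if r = 0 then c (n + ej) * Q k j (n + ej) else d (r - 1) (n + ej))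
                  * (Δ j)^[r] (ξ a j) n
                + (d r (n + ej) * (Δ j)^[r] (ξ a j) n - d r n * (Δ j)^[r] (ξ a j) n) := by
            intro r _; ring
          rw [Finset.sum_congr rfl hsplit, Finset.sum_add_distrib, Finset.sum_sub_distrib]
          congr 1
          · -- the if-sum : peel off r = 0
            rw [Finset.sum_range_succ' (fun r =>
              (if r = 0 then c (n + ej) * Q k j (n + ej) else d (r - 1) (n + ej))
                * (Δ j)^[r] (ξ a j) n) q]
            simp only [if_neg (Nat.succ_ne_zero _), Nat.add_sub_cancel, if_pos rfl]
            rw [add_comm]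
            rfl
          · congr 1 <;>
            · rw [Finset.sum_range_succ, hd0 q le_rfl, zero_mul, add_zero]
        rw [hRHS]
        ring

/-- The bilinear identity
`det 𝒲 · Δ_k(det ℍ_i) − det ℍ_i · Δ_k(det 𝒲) + det 𝒲_{ki} · T_k(det ℍ_k) = 0`
for `i ≠ k`, where `ℍ_i` is `𝒲` with the last row of the `i`-th block replaced by the
potentials `(Ω^1, …, Ω^M)` and `𝒲_{ki}` is `𝒲` with the last row of the `i`-th block
replaced by `Δ_k^{m_k} ξ_k`. -/
theorem statement_18 (N : ℕ) (hN : 2 ≤ N)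
    (Q : Fin N → Fin N → (Fin N → ℤ) → ℝ)
    (m : Fin N → ℕ) (hm : ∀ j, 0 < m j)
    (ξ : (Σ j : Fin N, Fin (m j)) → Fin N → (Fin N → ℤ) → ℝ)
    (hξ : ∀ a, ∀ j k : Fin N, j ≠ k → Δ k (ξ a j) = T k (Q j k) * ξ a k)
    (H : Fin N → (Fin N → ℤ) → ℝ)
    (hH : ∀ j k : Fin N, j ≠ k → Δ j (H k) = Q j k * T j (H j))
    (Ω : (Σ j : Fin N, Fin (m j)) → (Fin N → ℤ) → ℝ)
    (hΩ : ∀ a, ∀ l : Fin N, Δ l (Ω a) = ξ a l * T l (H l)) :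
    ∀ i k : Fin N, i ≠ k → ∀ n : Fin N → ℤ,
      (Wmat m ξ n).det
          * (((Wmat m ξ (n + Pi.single k 1)).updateRow (lastRow m i (hm i))
                (fun a => Ω a (n + Pi.single k 1))).det
             - ((Wmat m ξ n).updateRow (lastRow m i (hm i)) (fun a => Ω a n)).det)
        - ((Wmat m ξ n).updateRow (lastRow m i (hm i)) (fun a => Ω a n)).det
          * ((Wmat m ξ (n + Pi.single k 1)).det - (Wmat m ξ n).det)
        + ((Wmat m ξ n).updateRow (lastRow m i (hm i))
              (fun a => (Δ k)^[m k] (ξ a k) n)).det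
          * ((Wmat m ξ (n + Pi.single k 1)).updateRow (lastRow m k (hm k))
              (fun a => Ω a (n + Pi.single k 1))).det
        = 0 := by
  intro i k hik n
  classical
  set n' := n + Pi.single k 1 with hn'
  set W := Wmat m ξ n with hW
  set W' := Wmat m ξ n' with hW'
  set ri := lastRow m i (hm i) with hri
  set rk := lastRow m k (hm k) with hrk
  set Ωn : (Σ j : Fin N, Fin (m j)) → ℝ := fun a => Ω a n with hΩn
  set Ωn' : (Σ j : Fin N, Fin (m j)) → ℝ := fun a => Ω a n' with hΩn'
  set Ek : (Σ j : Fin N, Fin (m j)) → ℝ := fun a => (Δ k)^[m k] (ξ a k) n with hEk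
  -- basic distinctness facts
  have hik' : ri ≠ rk := fun h => hik (congrArg Sigma.fst h)
  set rk0 : (Σ j : Fin N, Fin (m j)) := ⟨k, ⟨0, hm k⟩⟩ with hrk0
  have hrk0ri : rk0 ≠ ri := fun h => hik ((congrArg Sigma.fst h).symm)
  -- lifted matrices
  set V : Matrix (Option (Σ j : Fin N, Fin (m j))) (Option (Σ j : Fin N, Fin (m j))) ℝ :=
    liftMat W 0 with hV
  set Zl : Matrix (Option (Σ j : Fin N, Fin (m j))) (Option (Σ j : Fin N, Fin (m j))) ℝ :=
    liftMat W' (fun s => if s = rk then 1 else 0) with hZl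
  have hpt : (some ri : Option (Σ j : Fin N, Fin (m j))) ≠ some rk :=
    fun h => hik' (Option.some_injective _ h)
  have hptne : (some rk : Option (Σ j : Fin N, Fin (m j))) ≠ some ri :=
    fun h => hik' (Option.some_injective _ h).symm
  have hnone : ∀ s : (Σ j : Fin N, Fin (m j)), (none : Option (Σ j : Fin N, Fin (m j))) ≠ some s :=
    fun s h => Option.some_ne_none s h.symm
  -- extended vectors
  set Ot : Option (Σ j : Fin N, Fin (m j)) → ℝ :=
    fun co => match co with | some a => Ωn a | none => 0 with hOt
  set Ot' : Option (Σ j : Fin N, Fin (m j)) → ℝ :=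
    fun co => match co with | some a => Ωn' a | none => 0 with hOt'
  set Et : Option (Σ j : Fin N, Fin (m j)) → ℝ :=
    fun co => match co with | some a => Ek a | none => 1 with hEt
  -- pointwise shift fact
  have hptwise : ∀ f : (Fin N → ℤ) → ℝ, f n' = f n + Δ k f n := by
    intro f; simp [Δ, hn']
  -- decomposition of the shifted rows in blocks j ≠ k
  have hZdecomp : ∀ (j : Fin N), j ≠ k → ∀ (q : Fin (m j)),
      ∃ w, w ∈ Submodule.span ℝ
          {v : Option (Σ j : Fin N, Fin (m j)) → ℝ | ∃ r', r' ≠ some ri ∧ v = V r'} ∧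
        Zl (some ⟨j, q⟩) = V (some ⟨j, q⟩) + w := by
    intro j hjk q
    obtain ⟨c, d, hd0, hcd⟩ := my_row_relation j k hjk Q ξ hξ (q : ℕ)
    refine ⟨(c n) • V (some rk0) + ∑ r ∈ Finset.range (q : ℕ),
      (d r n) • V (some ⟨j, ⟨r % m j, Nat.mod_lt _ (hm j)⟩⟩), ?_, ?_⟩
    · refine Submodule.add_mem _
        (Submodule.smul_mem _ _ (Submodule.subset_span ⟨some rk0, ?_, rfl⟩))
        (Submodule.sum_mem _ fun r hr => Submodule.smul_mem _ _
          (Submodule.subset_span ⟨some ⟨j, ⟨r % m j, Nat.mod_lt _ (hm j)⟩⟩, ?_, rfl⟩))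
      · intro h
        exact hrk0ri (Option.some_injective _ h)
      · intro h
        have h' : (⟨j, ⟨r % m j, Nat.mod_lt _ (hm j)⟩⟩ : Σ j : Fin N, Fin (m j)) = ri :=
          Option.some_injective _ h
        rw [hri, lastRow] at h'
        obtain ⟨hfst, hsnd⟩ := Sigma.mk.inj_iff.mp h'
        subst hfst
        have hv : r % m j = m j - 1 := congrArg Fin.val (eq_of_heq hsnd)
        have hrq : r < (q : ℕ) := Finset.mem_range.mp hr
        have hq : (q : ℕ) < m j := q.isLt
        rw [Nat.mod_eq_of_lt (by omega)] at hv
        omega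
    · funext co
      rcases co with _ | a
      · have h1 : Zl (some ⟨j, q⟩) none = 0 := by
          rw [hZl]
          show (if (⟨j, q⟩ : Σ j : Fin N, Fin (m j)) = rk then (1 : ℝ) else 0) = 0
          rw [if_neg (fun h => hjk (congrArg Sigma.fst h))]
        rw [h1]
        have h2 : V (some ⟨j, q⟩) none = 0 := rfl
        simp only [Pi.add_apply, Pi.smul_apply, Finset.sum_apply, h2]
        have h3 : V (some rk0) none = 0 := rfl
        rw [h3]
        have h4 : ∀ r ∈ Finset.range (q : ℕ),
            (d r n) • V (some ⟨j, ⟨r % m j, Nat.mod_lt _ (hm j)⟩⟩) none = 0 := by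
          intro r _
          show (d r n) • (0 : ℝ) = 0
          simp
        rw [Finset.sum_congr rfl h4]
        simp
      · have h1 : Zl (some ⟨j, q⟩) (some a) = (Δ j)^[(q : ℕ)] (ξ a j) n' := rfl
        have h2 : V (some ⟨j, q⟩) (some a) = (Δ j)^[(q : ℕ)] (ξ a j) n := rfl
        have h3 : V (some rk0) (some a) = ξ a k n := rfl
        rw [h1]
        simp only [Pi.add_apply, Pi.smul_apply, Finset.sum_apply, smul_eq_mul, h2, h3]
        rw [hptwise ((Δ j)^[(q : ℕ)] (ξ a j)), hcd a n]
        congr 1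
        congr 1
        refine Finset.sum_congr rfl fun r hr => ?_
        have hrq : r < (q : ℕ) := Finset.mem_range.mp hr
        have hlt : r < m j := lt_trans hrq q.isLt
        have h5 : V (some ⟨j, ⟨r % m j, Nat.mod_lt _ (hm j)⟩⟩) (some a)
            = (Δ j)^[r % m j] (ξ a j) n := rfl
        rw [h5, Nat.mod_eq_of_lt hlt]
  -- decomposition of the shifted rows in block k below the last row
  have hZk : ∀ (q : Fin (m k)), (⟨k, q⟩ : Σ j : Fin N, Fin (m j)) ≠ rk →
      Zl (some ⟨k, q⟩) = V (some ⟨k, q⟩)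
        + V (some ⟨k, ⟨((q : ℕ) + 1) % m k, Nat.mod_lt _ (hm k)⟩⟩) := by
    intro q hqrk
    have hqlt : (q : ℕ) + 1 < m k := by
      have h1 : (q : ℕ) < m k := q.isLt
      have h2 : (q : ℕ) ≠ m k - 1 := by
        intro h
        apply hqrk
        rw [hrk, lastRow]
        congr 1
        exact Fin.ext h
      omega
    funext co
    rcases co with _ | a
    · have h1 : Zl (some ⟨k, q⟩) none = 0 := by
        rw [hZl]
        show (if (⟨k, q⟩ : Σ j : Fin N, Fin (m j)) = rk then (1 : ℝ) else 0) = 0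
        rw [if_neg hqrk]
      rw [h1]
      show (0 : ℝ) = 0 + 0
      simp
    · have h1 : Zl (some ⟨k, q⟩) (some a) = (Δ k)^[(q : ℕ)] (ξ a k) n' := rfl
      have h2 : V (some ⟨k, q⟩) (some a) = (Δ k)^[(q : ℕ)] (ξ a k) n := rfl
      have h3 : V (some ⟨k, ⟨((q : ℕ) + 1) % m k, Nat.mod_lt _ (hm k)⟩⟩) (some a)
          = (Δ k)^[((q : ℕ) + 1) % m k] (ξ a k) n := rfl
      rw [h1]
      simp only [Pi.add_apply, h2, h3, Nat.mod_eq_of_lt hqlt]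
      rw [hn', my_iterate_shift]
      rfl
  -- the last row of block k
  have hZrk : Zl (some rk) = V (some rk) + Et := by
    funext co
    rcases co with _ | a
    · have h1 : Zl (some rk) none = 1 := by
        rw [hZl]
        show (if rk = rk then (1 : ℝ) else 0) = 1
        rw [if_pos rfl]
      rw [h1]
      show (1 : ℝ) = 0 + 1
      simp
    · have h1 : Zl (some rk) (some a) = (Δ k)^[((rk.2 : Fin (m k)) : ℕ)] (ξ a k) n' := rfl
      have h2 : V (some rk) (some a) = (Δ k)^[((rk.2 : Fin (m k)) : ℕ)] (ξ a k) n := rfl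
      have h3 : Et (some a) = Ek a := rfl
      rw [h1]
      show _ = V (some rk) (some a) + Et (some a)
      rw [h2, h3, hptwise ((Δ k)^[((rk.2 : Fin (m k)) : ℕ)] (ξ a k))]
      congr 1
      rw [hEk]
      show Δ k ((Δ k)^[m k - 1] (ξ a k)) n = (Δ k)^[m k] (ξ a k) n
      rw [← Function.iterate_succ_apply' (Δ k) (m k - 1) (ξ a k)]
      simp only [Nat.succ_eq_add_one]
      rw [Nat.sub_add_cancel (hm k)]
  -- the potential relation
  have hOrel : Ot' = Ot + (H k n') • V (some rk0) := by
    funext co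
    rcases co with _ | a
    · show (0 : ℝ) = 0 + (H k n') • V (some rk0) none
      have h0 : V (some rk0) none = 0 := rfl
      rw [h0]; simp
    · show Ωn' a = Ωn a + (H k n') • V (some rk0) (some a)
      have h3 : V (some rk0) (some a) = ξ a k n := rfl
      rw [h3]
      have h := congrFun (hΩ a k) n
      simp only [Δ, T, Pi.mul_apply] at h
      simp only [hΩn', hΩn, smul_eq_mul, hn']
      linarith [h]
  -- the span hypothesis of key4
  have hspan : ∀ r, r ≠ some ri → r ≠ some rk →
      Zl r ∈ Submodule.span ℝ
        {v : Option (Σ j : Fin N, Fin (m j)) → ℝ | ∃ r', r' ≠ some ri ∧ v = V r'} := by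
    intro r hrp hrt
    match r with
    | none =>
        have h1 : Zl none = V none := by
          funext co; rcases co with _ | a <;> rfl
        rw [h1]
        exact Submodule.subset_span ⟨none, hnone ri, rfl⟩
    | some s =>
        obtain ⟨j, q⟩ := s
        by_cases hjk : j = k
        · subst hjk
          have hne : (⟨j, q⟩ : Σ j' : Fin N, Fin (m j')) ≠ rk :=
            fun h => hrt (congrArg some h)
          rw [hZk q hne]
          refine Submodule.add_mem _ (Submodule.subset_span ⟨some ⟨j, q⟩, hrp, rfl⟩)
            (Submodule.subset_span ⟨some ⟨j, ⟨((q : ℕ) + 1) % m j, Nat.mod_lt _ (hm j)⟩⟩, ?_, rfl⟩)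
          intro h
          have h' := Option.some_injective _ h
          exact hik (congrArg Sigma.fst h').symm
        · obtain ⟨w, hw, hdec⟩ := hZdecomp j hjk q
          rw [hdec]
          exact Submodule.add_mem _ (Submodule.subset_span ⟨some ⟨j, q⟩, hrp, rfl⟩) hw
  -- determinant evaluations
  have hzero_rk0 : (V.updateRow (some ri) (V (some rk0))).det = 0 := by
    refine Matrix.det_zero_of_row_eq
      (show (some ri : Option (Σ j : Fin N, Fin (m j))) ≠ some rk0
        from fun h => hrk0ri (Option.some_injective _ h).symm) ?_
    rw [Matrix.updateRow_self,
      Matrix.updateRow_ne (fun h => hrk0ri (Option.some_injective _ h))]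
  have D1 : (V.updateRow (some ri) (Zl (some ri))).det = W.det := by
    obtain ⟨w, hw, hdec⟩ := hZdecomp i hik ri.2
    have hdec' : Zl (some ri) = V (some ri) + w := hdec
    rw [hdec', Matrix.det_updateRow_add, Matrix.updateRow_eq_self,
      my_det_updateRow_span V (some ri) w hw, add_zero, hV, det_liftMat]
  have MEq3 : V.updateRow (some ri) Ot = liftMat (W.updateRow ri Ωn) 0 := by
    ext r co
    match r with
    | none =>
        rw [Matrix.updateRow_ne (hnone ri)]
        rcases co with _ | a <;> rfl
    | some s =>
        by_cases hs : s = ri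
        · subst hs
          rw [Matrix.updateRow_self]
          rcases co with _ | a
          · rfl
          · show Ωn a = (W.updateRow ri Ωn) ri a
            rw [Matrix.updateRow_self]
        · rw [Matrix.updateRow_ne (fun h => hs (Option.some_injective _ h))]
          rcases co with _ | a
          · rfl
          · show W s a = (W.updateRow ri Ωn) s a
            rw [Matrix.updateRow_ne hs]
  have D5 : (V.updateRow (some ri) Ot').det = (W.updateRow ri Ωn).det := by
    rw [hOrel, Matrix.det_updateRow_add, Matrix.det_updateRow_smul, hzero_rk0,
      mul_zero, add_zero, MEq3, det_liftMat]
  have MEq4 : V.updateRow (some ri) Et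
      = liftMat (W.updateRow ri Ek) (fun s => if s = ri then 1 else 0) := by
    ext r co
    match r with
    | none =>
        rw [Matrix.updateRow_ne (hnone ri)]
        rcases co with _ | a <;> rfl
    | some s =>
        by_cases hs : s = ri
        · subst hs
          rw [Matrix.updateRow_self]
          rcases co with _ | a
          · show (1 : ℝ) = if ri = ri then 1 else 0
            rw [if_pos rfl]
          · show Ek a = (W.updateRow ri Ek) ri a
            rw [Matrix.updateRow_self]
        · rw [Matrix.updateRow_ne (fun h => hs (Option.some_injective _ h))]
          rcases co with _ | a
          · show (0 : ℝ) = if s = ri then 1 else 0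
            rw [if_neg hs]
          · show W s a = (W.updateRow ri Ek) s a
            rw [Matrix.updateRow_ne hs]
  have D6 : (V.updateRow (some ri) (Zl (some rk))).det = (W.updateRow ri Ek).det := by
    rw [hZrk, Matrix.det_updateRow_add]
    have hz : (V.updateRow (some ri) (V (some rk))).det = 0 := by
      refine Matrix.det_zero_of_row_eq hpt ?_
      rw [Matrix.updateRow_self, Matrix.updateRow_ne hptne]
    rw [hz, zero_add, MEq4, det_liftMat]
  have MEq1 : Zl.updateRow (some ri) Ot'
      = liftMat (W'.updateRow ri Ωn') (fun s => if s = rk then 1 else 0) := by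
    ext r co
    match r with
    | none =>
        rw [Matrix.updateRow_ne (hnone ri)]
        rcases co with _ | a <;> rfl
    | some s =>
        by_cases hs : s = ri
        · subst hs
          rw [Matrix.updateRow_self]
          rcases co with _ | a
          · show (0 : ℝ) = if ri = rk then 1 else 0
            rw [if_neg (hri ▸ hik')]
          · show Ωn' a = (W'.updateRow ri Ωn') ri a
            rw [Matrix.updateRow_self]
        · rw [Matrix.updateRow_ne (fun h => hs (Option.some_injective _ h))]
          rcases co with _ | a
          · rfl
          · show W' s a = (W'.updateRow ri Ωn') s a
            rw [Matrix.updateRow_ne hs]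
  have MEq2 : Zl.updateRow (some rk) Ot' = liftMat (W'.updateRow rk Ωn') 0 := by
    ext r co
    match r with
    | none =>
        rw [Matrix.updateRow_ne (hnone rk)]
        rcases co with _ | a <;> rfl
    | some s =>
        by_cases hs : s = rk
        · subst hs
          rw [Matrix.updateRow_self]
          rcases co with _ | a
          · rfl
          · show Ωn' a = (W'.updateRow rk Ωn') rk a
            rw [Matrix.updateRow_self]
        · rw [Matrix.updateRow_ne (fun h => hs (Option.some_injective _ h))]
          rcases co with _ | a
          · show (if s = rk then (1:ℝ) else 0) = 0
            rw [if_neg hs]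
          · show W' s a = (W'.updateRow rk Ωn') s a
            rw [Matrix.updateRow_ne hs]
  -- assemble via the Plücker-type identity
  have hyp := key4 V Zl (some ri) (some rk) hpt hspan (Zl (some ri)) Ot' (Zl (some rk))
  rw [Matrix.updateRow_eq_self Zl (some ri)] at hyp
  have hcollapse : (Zl.updateRow (some ri) Ot').updateRow (some rk) (Zl (some rk))
      = Zl.updateRow (some ri) Ot' := by
    have h : Zl (some rk) = (Zl.updateRow (some ri) Ot') (some rk) :=
      (Matrix.updateRow_ne hptne).symm
    rw [h, Matrix.updateRow_eq_self]
  rw [hcollapse, Matrix.updateRow_eq_self Zl (some rk)] at hyp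
  rw [D1, D5, D6, MEq1, MEq2, det_liftMat, det_liftMat, det_liftMat] at hyp
  linear_combination hyp
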